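/- Let R be a (possibly non-unital) ring and M a simple left R-module with R • M = M. If λ, λ' ∈ M are such that for all r ∈ R, r • λ = 0 implies r • λ' = 0, and the endomorphism ring of M as an R-module consists of scalar multiplications by a field k₀ acting on M, then λ' is a scalar multiple of λ. -/

import Mathlib

/-- Let `R` be a (possibly non-unital) ring and `M` a simple left `R`-module with `R • M = M`.
If `λ, λ' ∈ M` are such that for all `r ∈ R`, `r • λ = 0` implies `r • λ' = 0`, and the
endomorphism ring of `M` as an `R`-module consists of scalar multiplications by a field `k₀`
acting on `M` (commuting with the `R`-action), then `λ'` is a scalar multiple of `λ`.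

The (possibly non-unital) action of `R` on `M` is encoded by a biadditive map
`ρ : R →+ M →+ M` satisfying `ρ (r * s) = ρ r ∘ ρ s`. -/
theorem stmt2 (R : Type*) [NonUnitalRing R] (M : Type*) [AddCommGroup M]
    (k₀ : Type*) [Field k₀] [Module k₀ M]
    (ρ : R →+ M →+ M)
    -- `ρ` is a (non-unital) module structure:
    (hassoc : ∀ (r s : R) (m : M), ρ (r * s) m = ρ r (ρ s m))
    -- the `k₀`-action commutes with the `R`-action:
    (hcomm : ∀ (r : R) (a : k₀) (m : M), ρ r (a • m) = a • ρ r m)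
    -- `M` is nonzero:
    (hMne : ∃ m : M, m ≠ 0)
    -- `R • M = M`:
    (hRM : AddSubgroup.closure {m : M | ∃ (r : R) (x : M), ρ r x = m} = ⊤)
    -- `M` is a simple `R`-module:
    (hsimple : ∀ N : AddSubgroup M, (∀ r : R, ∀ x ∈ N, ρ r x ∈ N) → N = ⊥ ∨ N = ⊤)
    -- every `R`-module endomorphism of `M` is a scalar multiplication by an element of `k₀`:
    (hschur : ∀ f : M →+ M, (∀ (r : R) (m : M), f (ρ r m) = ρ r (f m)) →
      ∃ a : k₀, ∀ m : M, f m = a • m)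
    (lam lam' : M)
    (h : ∀ r : R, ρ r lam = 0 → ρ r lam' = 0) :
    ∃ a : k₀, lam' = a • lam := by
  classical
  -- Step 0: any element annihilated by all of `R` is zero.
  have hzero : ∀ m : M, (∀ r : R, ρ r m = 0) → m = 0 := by
    intro m hm
    set N : AddSubgroup M :=
      { carrier := {x | ∀ r : R, ρ r x = 0}
        zero_mem' := by intro r; simp
        add_mem' := by intro a b ha hb r; simp [ha r, hb r]
        neg_mem' := by intro a ha r; simp [ha r] } with hN
    have hinv : ∀ r : R, ∀ x ∈ N, ρ r x ∈ N := by
      intro r x hx s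
      rw [← hassoc]
      exact hx (s * r)
    rcases hsimple N hinv with hb | ht
    · have : m ∈ N := hm
      rw [hb] at this
      exact this
    · exfalso
      obtain ⟨m₀, hm₀⟩ := hMne
      have hall : ∀ (r : R) (x : M), ρ r x = 0 := by
        intro r x
        have : x ∈ N := ht ▸ AddSubgroup.mem_top x
        exact this r
      have hsub : {m : M | ∃ (r : R) (x : M), ρ r x = m} ⊆ (⊥ : AddSubgroup M) := by
        rintro y ⟨r, x, rfl⟩
        simp [hall r x]
      have : (⊤ : AddSubgroup M) ≤ ⊥ := hRM ▸ (AddSubgroup.closure_le ⊥).2 hsub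
      exact hm₀ (AddSubgroup.mem_bot.1 (this (AddSubgroup.mem_top m₀)))
  set g : R →+ M := ρ.flip lam with hg
  set g' : R →+ M := ρ.flip lam' with hg'
  have hgapp : ∀ r : R, g r = ρ r lam := fun r => rfl
  have hg'app : ∀ r : R, g' r = ρ r lam' := fun r => rfl
  -- the range of `g` is `R`-invariant
  have hinv : ∀ r : R, ∀ x ∈ g.range, ρ r x ∈ g.range := by
    rintro r x ⟨s, rfl⟩
    exact ⟨r * s, by simp [hgapp, hassoc]⟩
  rcases hsimple g.range hinv with hb | ht
  · -- `ρ r lam = 0` for all `r`, hence also for `lam'`; both are zero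
    have hlam0 : ∀ r : R, ρ r lam = 0 := by
      intro r
      have : g r ∈ g.range := ⟨r, rfl⟩
      rw [hb] at this
      exact this
    have hlam'0 : lam' = 0 := hzero _ fun r => h r (hlam0 r)
    exact ⟨0, by simp [hlam'0]⟩
  · have hsurj : Function.Surjective g := by
      intro m
      have : m ∈ g.range := ht ▸ AddSubgroup.mem_top m
      exact this
    have hker : ∀ r ∈ g.ker, g' r = 0 := by
      intro r hr
      exact h r (AddMonoidHom.mem_ker.1 hr)
    set e : (R ⧸ g.ker) ≃+ M := QuotientAddGroup.quotientKerEquivOfSurjective g hsurj with he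
    set L : (R ⧸ g.ker) →+ M := QuotientAddGroup.lift g.ker g' hker with hL
    set f : M →+ M := L.comp e.symm.toAddMonoidHom with hf
    have hemk : ∀ r : R, e (QuotientAddGroup.mk r) = g r := by
      intro r
      rfl
    have hfg : ∀ r : R, f (g r) = g' r := by
      intro r
      have h1 : e.symm (g r) = QuotientAddGroup.mk r := by
        rw [AddEquiv.symm_apply_eq, hemk]
      simp [hf, h1, hL, QuotientAddGroup.lift_mk']
      rfl
    have hfcomm : ∀ (r : R) (m : M), f (ρ r m) = ρ r (f m) := by
      intro r m
      obtain ⟨s, rfl⟩ := hsurj m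
      rw [hgapp, ← hassoc, ← hgapp (r * s), hfg, ← hgapp s, hfg, hg'app, hg'app, hassoc]
    obtain ⟨a, ha⟩ := hschur f hfcomm
    refine ⟨a, ?_⟩
    have key : ∀ r : R, ρ r (lam' - a • lam) = 0 := by
      intro r
      have h1 : f (ρ r lam) = ρ r lam' := by rw [← hgapp, hfg, hg'app]
      have h2 : f (ρ r lam) = a • ρ r lam := ha _
      rw [map_sub, hcomm, ← h1, h2, sub_self]
    have := hzero _ key
    rw [sub_eq_zero] at this
    exact this
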